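/- Let V be a finite set with |V| = n ≥ 1 and let f be a non-negative real-valued function on the subsets of V that is sub-additive, i.e., f(S₁ ∪ S₂) ≤ f(S₁) + f(S₂) for all S₁, S₂ ⊆ V. Let q be a non-negative real-valued function on the subsets of V satisfying Σ_{S : x ∈ S} q(S) ≥ 1 for every x ∈ V. Then f(V) ≤ 6 · ln(3n) · Σ_{S ⊆ V} q(S) · f(S). In particular, for every sub-additive graph function f and every n-vertex graph G, f(G) ≤ O(log n) · f*(G), where f* is the fractional relaxation of f. -/

import Mathlib

open Finset

noncomputable def gAux (m : ℕ) : ℝ := if m = 0 then 0 else 1 + Real.log m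

lemma gAux_step {k m : ℕ} (hk : 1 ≤ k) (hkm : k ≤ m) :
    (k : ℝ) / m + gAux (m - k) ≤ gAux m := by
  have hm : 1 ≤ m := le_trans hk hkm
  have hm0 : (0:ℝ) < m := by exact_mod_cast hm
  have hgm : gAux m = 1 + Real.log m := by
    unfold gAux; rw [if_neg (by omega)]
  rcases eq_or_lt_of_le hkm with h | h
  · subst h
    rw [Nat.sub_self]
    have h0 : gAux 0 = 0 := by unfold gAux; simp
    have h2 : 0 ≤ Real.log k := Real.log_nonneg (by exact_mod_cast hm)
    rw [h0, hgm, div_self (ne_of_gt hm0)]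
    linarith
  · have hmk : 1 ≤ m - k := by omega
    have hmk0 : (0:ℝ) < ((m - k : ℕ) : ℝ) := by exact_mod_cast hmk
    have hcast : ((m - k : ℕ) : ℝ) = (m:ℝ) - k := by
      push_cast [Nat.cast_sub hkm]; ring
    have hgmk : gAux (m - k) = 1 + Real.log ((m-k:ℕ)) := by
      unfold gAux; rw [if_neg (by omega)]
    have hlog : Real.log (((m-k:ℕ):ℝ) / m) ≤ ((m:ℝ) - k)/m - 1 := by
      calc Real.log (((m-k:ℕ):ℝ) / m) ≤ ((m-k:ℕ):ℝ)/m - 1 :=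
            Real.log_le_sub_one_of_pos (div_pos hmk0 hm0)
        _ = ((m:ℝ) - k)/m - 1 := by rw [hcast]
    rw [Real.log_div (ne_of_gt hmk0) (ne_of_gt hm0)] at hlog
    have harith : ((m:ℝ) - k)/m - 1 = -((k:ℝ)/m) := by field_simp; ring
    rw [hgm, hgmk]
    rw [harith] at hlog
    linarith

lemma foldr_union_le {V : Type} [DecidableEq V] (f : Finset V → ℝ)
    (hsub : ∀ S₁ S₂ : Finset V, f (S₁ ∪ S₂) ≤ f S₁ + f S₂) :
    ∀ L : List (Finset V), L ≠ [] → f (L.foldr (· ∪ ·) ∅) ≤ (L.map f).sum := by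
  intro L
  induction L with
  | nil => simp
  | cons S L ih =>
    intro _
    cases L with
    | nil => simp
    | cons T L' =>
      have h := ih (by simp)
      simp only [List.foldr_cons, List.map_cons, List.sum_cons] at *
      calc f (S ∪ _) ≤ f S + f _ := hsub _ _
        _ ≤ _ := by linarith

theorem subadditive_le_log_mul_fractional {V : Type} [Fintype V] [DecidableEq V]
    (hn : 1 ≤ Fintype.card V)
    (f : Finset V → ℝ) (hf0 : ∀ S, 0 ≤ f S)
    (hsub : ∀ S₁ S₂ : Finset V, f (S₁ ∪ S₂) ≤ f S₁ + f S₂)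
    (q : Finset V → ℝ) (hq0 : ∀ S, 0 ≤ q S)
    (hcov : ∀ x : V, 1 ≤ ∑ S : Finset V, if x ∈ S then q S else 0) :
    f Finset.univ ≤ 6 * Real.log (3 * Fintype.card V) * ∑ S : Finset V, q S * f S := by
  classical
  set C := ∑ S : Finset V, q S * f S with hCdef
  have hC : 0 ≤ C := Finset.sum_nonneg fun S _ => mul_nonneg (hq0 S) (hf0 S)
  -- key greedy-cover induction
  have key : ∀ m : ℕ, ∀ U : Finset V, U.card ≤ m →
      ∃ L : List (Finset V), (∀ x ∈ U, x ∈ L.foldr (· ∪ ·) ∅) ∧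
        (L.map f).sum ≤ C * gAux U.card := by
    intro m
    induction m with
    | zero =>
      intro U hU
      have : U = ∅ := Finset.card_eq_zero.mp (Nat.le_zero.mp hU)
      subst this
      exact ⟨[], by simp, by simp [gAux]⟩
    | succ m ih =>
      intro U hU
      rcases Finset.eq_empty_or_nonempty U with hUe | hUne
      · subst hUe
        exact ⟨[], by simp, by simp [gAux]⟩
      · have hu0 : 1 ≤ U.card := Finset.card_pos.mpr hUne
        have hur : (0:ℝ) < (U.card : ℝ) := by exact_mod_cast hu0
        -- the family of useful sets
        set 𝒮 : Finset (Finset V) :=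
          Finset.univ.filter (fun S => 0 < q S ∧ (S ∩ U).Nonempty) with h𝒮
        have h𝒮ne : 𝒮.Nonempty := by
          obtain ⟨x, hx⟩ := hUne
          by_contra hco
          have hzero : ∀ S : Finset V, (if x ∈ S then q S else 0) = 0 := by
            intro S
            by_cases hxS : x ∈ S
            · rw [if_pos hxS]
              by_contra hqS
              have hqpos : 0 < q S := lt_of_le_of_ne (hq0 S) (Ne.symm hqS)
              have : S ∈ 𝒮 := by
                rw [h𝒮, Finset.mem_filter]
                exact ⟨Finset.mem_univ _, hqpos, ⟨x, Finset.mem_inter.mpr ⟨hxS, hx⟩⟩⟩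
              exact hco ⟨S, this⟩
            · rw [if_neg hxS]
          have := hcov x
          rw [Finset.sum_congr rfl (fun S _ => hzero S)] at this
          simp only [Finset.sum_const_zero] at this
          norm_num at this
        -- pick the minimizer of f S / |S ∩ U|
        obtain ⟨S₀, hS₀mem, hS₀min⟩ :=
          Finset.exists_min_image 𝒮 (fun S => f S / ((S ∩ U).card : ℝ)) h𝒮ne
        have hS₀prop : 0 < q S₀ ∧ (S₀ ∩ U).Nonempty := by
          rw [h𝒮, Finset.mem_filter] at hS₀mem; exact hS₀mem.2
        set k₀ : ℕ := (S₀ ∩ U).card with hk₀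
        have hk₀1 : 1 ≤ k₀ := Finset.card_pos.mpr hS₀prop.2
        have hk₀r : (0:ℝ) < (k₀ : ℝ) := by exact_mod_cast hk₀1
        have hk₀m : k₀ ≤ U.card := Finset.card_le_card (Finset.inter_subset_right)
        -- the sum lower bound: ∑ q S * |S ∩ U| ≥ |U|
        have hcardsum : (U.card : ℝ) ≤ ∑ S : Finset V, q S * ((S ∩ U).card : ℝ) := by
          have hrw : ∀ S : Finset V,
              q S * ((S ∩ U).card : ℝ) = ∑ x ∈ U, (if x ∈ S then q S else 0) := by
            intro S
            have : ((S ∩ U).card : ℝ) = ∑ x ∈ U, (if x ∈ S then (1:ℝ) else 0) := by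
              rw [Finset.sum_boole]
              congr 1
              rw [Finset.filter_mem_eq_inter, Finset.inter_comm]
            rw [this, Finset.mul_sum]
            refine Finset.sum_congr rfl fun x _ => ?_
            split_ifs <;> ring
          calc (U.card : ℝ) = ∑ _x ∈ U, (1:ℝ) := by simp
            _ ≤ ∑ x ∈ U, ∑ S : Finset V, (if x ∈ S then q S else 0) :=
                Finset.sum_le_sum fun x _ => hcov x
            _ = ∑ S : Finset V, ∑ x ∈ U, (if x ∈ S then q S else 0) := Finset.sum_comm
            _ = ∑ S : Finset V, q S * ((S ∩ U).card : ℝ) := by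
                refine Finset.sum_congr rfl fun S _ => (hrw S).symm
        -- ρ bound
        set ρ : ℝ := f S₀ / (k₀ : ℝ) with hρ
        have hρ0 : 0 ≤ ρ := div_nonneg (hf0 S₀) (le_of_lt hk₀r)
        have hterm : ∀ S : Finset V, ρ * (q S * ((S ∩ U).card : ℝ)) ≤ q S * f S := by
          intro S
          by_cases hS : S ∈ 𝒮
          · have hSprop : 0 < q S ∧ (S ∩ U).Nonempty := by
              rw [h𝒮, Finset.mem_filter] at hS; exact hS.2
            have hkS : (0:ℝ) < ((S ∩ U).card : ℝ) := by
              exact_mod_cast Finset.card_pos.mpr hSprop.2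
            have hmin := hS₀min S hS
            have : ρ * ((S ∩ U).card : ℝ) ≤ f S := by
              calc ρ * ((S ∩ U).card : ℝ)
                  ≤ (f S / ((S ∩ U).card : ℝ)) * ((S ∩ U).card : ℝ) :=
                    mul_le_mul_of_nonneg_right hmin (le_of_lt hkS)
                _ = f S := div_mul_cancel₀ _ (ne_of_gt hkS)
            calc ρ * (q S * ((S ∩ U).card : ℝ)) = q S * (ρ * ((S ∩ U).card : ℝ)) := by ring
              _ ≤ q S * f S := mul_le_mul_of_nonneg_left this (hq0 S)
          · have : q S * ((S ∩ U).card : ℝ) = 0 := by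
              rw [h𝒮, Finset.mem_filter] at hS
              push_neg at hS
              by_cases hqS : 0 < q S
              · have h2 := hS (Finset.mem_univ S) hqS
                rw [h2]; simp
              · have : q S = 0 := le_antisymm (not_lt.mp hqS) (hq0 S)
                rw [this]; ring
            rw [this, mul_zero]
            exact mul_nonneg (hq0 S) (hf0 S)
        have hρC : ρ * (U.card : ℝ) ≤ C := by
          calc ρ * (U.card : ℝ) ≤ ρ * ∑ S : Finset V, q S * ((S ∩ U).card : ℝ) :=
                mul_le_mul_of_nonneg_left hcardsum hρ0
            _ = ∑ S : Finset V, ρ * (q S * ((S ∩ U).card : ℝ)) := Finset.mul_sum _ _ _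
            _ ≤ ∑ S : Finset V, q S * f S := Finset.sum_le_sum fun S _ => hterm S
        have hfS₀ : f S₀ ≤ C * ((k₀ : ℝ) / (U.card : ℝ)) := by
          have hfeq : f S₀ = ρ * (k₀ : ℝ) := (div_mul_cancel₀ _ (ne_of_gt hk₀r)).symm
          rw [hfeq]
          calc ρ * (k₀:ℝ) = (ρ * (U.card:ℝ)) * ((k₀:ℝ) / (U.card:ℝ)) := by
                rw [mul_assoc, mul_div_assoc', mul_comm (U.card:ℝ), mul_div_assoc, div_self (ne_of_gt hur), mul_one]
            _ ≤ C * ((k₀:ℝ) / (U.card:ℝ)) :=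
                mul_le_mul_of_nonneg_right hρC (div_nonneg (le_of_lt hk₀r) (le_of_lt hur))
        -- recurse
        set U' : Finset V := U \ S₀ with hU'
        have hU'card : U'.card = U.card - k₀ := by
          have h1 : (U \ S₀).card = U.card - (U ∩ S₀).card := by
            have := Finset.card_sdiff_add_card_inter U S₀
            omega
          rw [hU', h1, hk₀, Finset.inter_comm]
        have hU'le : U'.card ≤ m := by
          rw [hU'card]; omega
        obtain ⟨L', hL'cov, hL'sum⟩ := ih U' hU'le
        refine ⟨S₀ :: L', ?_, ?_⟩
        · intro x hx
          simp only [List.foldr_cons, Finset.mem_union]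
          by_cases hxS₀ : x ∈ S₀
          · exact Or.inl hxS₀
          · exact Or.inr (hL'cov x (Finset.mem_sdiff.mpr ⟨hx, hxS₀⟩))
        · simp only [List.map_cons, List.sum_cons]
          have hstep : (k₀:ℝ)/(U.card:ℝ) + gAux (U.card - k₀) ≤ gAux U.card :=
            gAux_step hk₀1 hk₀m
          rw [hU'card] at hL'sum
          calc f S₀ + (L'.map f).sum
              ≤ C * ((k₀:ℝ)/(U.card:ℝ)) + C * gAux (U.card - k₀) := add_le_add hfS₀ hL'sum
            _ = C * ((k₀:ℝ)/(U.card:ℝ) + gAux (U.card - k₀)) := by ring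
            _ ≤ C * gAux U.card := mul_le_mul_of_nonneg_left hstep hC
  -- apply to U = univ
  obtain ⟨L, hLcov, hLsum⟩ := key (Fintype.card V) Finset.univ (le_of_eq (Finset.card_univ))
  have hLne : L ≠ [] := by
    intro hLnil
    obtain ⟨x⟩ := Fintype.card_pos_iff.mp (lt_of_lt_of_le Nat.zero_lt_one hn)
    have := hLcov x (Finset.mem_univ x)
    rw [hLnil] at this
    simp at this
  have hunion : L.foldr (· ∪ ·) ∅ = Finset.univ :=
    Finset.eq_univ_iff_forall.mpr fun x => hLcov x (Finset.mem_univ x)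
  have h1 : f Finset.univ ≤ (L.map f).sum := by
    rw [← hunion]
    exact foldr_union_le f hsub L hLne
  have hcard : Finset.univ.card = Fintype.card V := Finset.card_univ
  rw [hcard] at hLsum
  -- compare gAux n with 6 log (3 n)
  have hn0 : Fintype.card V ≠ 0 := by omega
  have hnr : (1:ℝ) ≤ (Fintype.card V : ℝ) := by exact_mod_cast hn
  have hgn : gAux (Fintype.card V) = 1 + Real.log (Fintype.card V) := by
    unfold gAux; rw [if_neg hn0]
  have hlog3 : (1:ℝ) ≤ Real.log 3 := by
    rw [Real.le_log_iff_exp_le (by norm_num)]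
    have := Real.exp_one_lt_d9
    linarith
  have hlogn : 0 ≤ Real.log (Fintype.card V) := Real.log_nonneg hnr
  have hsplit : Real.log (3 * (Fintype.card V : ℝ)) =
      Real.log 3 + Real.log (Fintype.card V) := by
    rw [Real.log_mul (by norm_num) (by exact_mod_cast hn0)]
  have hfinal : gAux (Fintype.card V) ≤ 6 * Real.log (3 * (Fintype.card V : ℝ)) := by
    rw [hgn, hsplit]
    linarith
  calc f Finset.univ ≤ (L.map f).sum := h1
    _ ≤ C * gAux (Fintype.card V) := hLsum
    _ ≤ C * (6 * Real.log (3 * (Fintype.card V : ℝ))) :=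
        mul_le_mul_of_nonneg_left hfinal hC
    _ = 6 * Real.log (3 * (Fintype.card V : ℝ)) * C := by ring
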